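/- Fix x₀ in (0, π/2) and let a = -log(cos x₀)/x₀². Then a > 1/2. -/

import Mathlib

theorem stmt_9 (x₀ : ℝ) (hx₀ : x₀ ∈ Set.Ioo (0:ℝ) (Real.pi/2)) :
    -Real.log (Real.cos x₀) / x₀^2 > 1/2 := by
  obtain ⟨hx0, hxp⟩ := hx₀
  set f : ℝ → ℝ := fun t => -Real.log (Real.cos t) - t^2/2 with hf
  have hcos : ∀ t ∈ Set.Icc (0:ℝ) x₀, 0 < Real.cos t := by
    intro t ht
    exact Real.cos_pos_of_mem_Ioo ⟨by linarith [ht.1, Real.pi_pos], by linarith [ht.2]⟩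
  have hderiv : ∀ t ∈ Set.Icc (0:ℝ) x₀, HasDerivAt f (Real.tan t - t) t := by
    intro t ht
    have h1 : HasDerivAt (fun t => Real.log (Real.cos t)) (-Real.sin t / Real.cos t) t :=
      (Real.hasDerivAt_cos t).log (hcos t ht).ne'
    have h2 : HasDerivAt (fun t : ℝ => t^2/2) t t := by
      have := (hasDerivAt_pow 2 t).div_const 2
      simpa using this
    have := (h1.neg).sub h2
    convert this using 1
    · rfl
    · rfl
    · rfl
    rw [Real.tan_eq_sin_div_cos]; ring
  have hmono : StrictMonoOn f (Set.Icc 0 x₀) := by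
    apply strictMonoOn_of_deriv_pos (convex_Icc 0 x₀)
    · exact fun t ht => (hderiv t ht).continuousAt.continuousWithinAt
    · intro t ht
      rw [interior_Icc] at ht
      rw [(hderiv t ⟨ht.1.le, ht.2.le⟩).deriv]
      have := Real.lt_tan ht.1 (lt_trans ht.2 hxp)
      linarith
  have hfx : f 0 < f x₀ := hmono ⟨le_refl 0, hx0.le⟩ ⟨hx0.le, le_refl x₀⟩ hx0
  simp only [hf, Real.cos_zero, Real.log_one] at hfx
  have hx2 : 0 < x₀^2 := by positivity
  rw [gt_iff_lt, lt_div_iff₀ hx2]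
  nlinarith
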